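/- Let 0 < 25α < 1 and let D be a sufficiently large n-vertex simple directed graph with minimum out-degree δ⁺(D) ≥ (1/2 − α)n and containing no cyclically directed triangle (no three vertices x,y,z with arcs (x,y),(y,z),(z,x)). Then the underlying simple graph G of D is (K₃, 4√α)-extremal: there exist disjoint vertex sets T, U with |T|, |U| ≥ (1/2 − 4√α)n and e(G[T]) = e(G[U]) = 0 (in fact T and U can be taken independent). -/
import Mathlib


open Finset

set_option maxHeartbeats 2000000 in
/-- For `0 < 25α < 1` and `n` sufficiently large, every `n`-vertex
simple digraph with minimum out-degree at least `(1/2 - α)n` and no cyclically directed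
triangle has an underlying graph that is `(K₃, 4√α)`-extremal: there are two disjoint
independent sets each of size at least `(1/2 - 4√α)n`. -/
theorem stmt_10 :
    ∀ α : ℝ, 0 < α → 25 * α < 1 →
    ∃ n₀ : ℕ, ∀ n : ℕ, n₀ ≤ n →
    ∀ (V : Type) (_ : Fintype V) (_ : DecidableEq V)
      (D : V → V → Prop) (_ : DecidableRel D),
      Fintype.card V = n →
      (∀ v, ¬ D v v) →
      (∀ v : V, ((1 : ℝ) / 2 - α) * (n : ℝ)
        ≤ ((Finset.univ.filter (fun w => D v w)).card : ℝ)) →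
      (¬ ∃ x y z : V, D x y ∧ D y z ∧ D z x) →
      ∃ T U : Finset V, Disjoint T U ∧
        ((1 : ℝ) / 2 - 4 * Real.sqrt α) * (n : ℝ) ≤ T.card ∧
        ((1 : ℝ) / 2 - 4 * Real.sqrt α) * (n : ℝ) ≤ U.card ∧
        (∀ u ∈ T, ∀ v ∈ T, ¬ D u v) ∧
        (∀ u ∈ U, ∀ v ∈ U, ¬ D u v) := by
  classical
  intro α hα hα25
  refine ⟨3, ?_⟩
  intro n hn V _ _ D _ hcard hirr hdeg htri
  have hβpos : 0 < Real.sqrt α := Real.sqrt_pos.mpr hα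
  have hβsq : Real.sqrt α ^ 2 = α := Real.sq_sqrt hα.le
  set β := Real.sqrt α with hβdef
  by_cases hβ8 : (1:ℝ)/8 ≤ β
  · -- trivial case : the required bound is nonpositive
    have h0 : (0:ℝ) ≤ (4*β - 1/2) * n := by
      apply mul_nonneg (by linarith) (Nat.cast_nonneg n)
    refine ⟨∅, ∅, Finset.disjoint_empty_left _, ?_, ?_, by simp, by simp⟩ <;>
      · simp only [card_empty, Nat.cast_zero]
        nlinarith
  push_neg at hβ8
  have hα' : α < 1/25 := by linarith
  have hββ : β*β < (1/8)*β := mul_lt_mul_of_pos_right hβ8 hβpos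
  have hαβ : α < β/8 := by rw [← hβsq, sq]; linarith
  have hn3 : (3:ℝ) ≤ (n:ℝ) := by exact_mod_cast hn
  have hnpos : (0:ℝ) < n := by linarith
  have h1 : ∀ x y z : V, D x y → D y z → D z x → False :=
    fun x y z a b c => htri ⟨x, y, z, a, b, c⟩
  -- out-neighbourhoods of out-neighbours of u avoid in-neighbourhood of u
  have houtsub : ∀ u s : V, D u s →
      univ.filter (fun w => D s w) ⊆ univ \ univ.filter (fun w => D w u) := by
    intro u s hus x hx
    rw [mem_filter] at hx
    rw [mem_sdiff, mem_filter]
    exact ⟨mem_univ x, fun h => h1 u s x hus hx.2 h.2⟩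
  -- in-degree upper bound
  have hinle : ∀ u : V, ((univ.filter (fun w => D w u)).card : ℝ) ≤ ((1:ℝ)/2 + α) * n := by
    intro u
    have hpos' : (0:ℝ) < ((1:ℝ)/2 - α) * n := mul_pos (by linarith) hnpos
    have hpos : (0:ℝ) < ((univ.filter (fun w => D u w)).card : ℝ) := lt_of_lt_of_le hpos' (hdeg u)
    have hne : (univ.filter (fun w => D u w)).Nonempty := card_pos.mp (by exact_mod_cast hpos)
    obtain ⟨w, hw⟩ := hne
    have hw' : D u w := (mem_filter.mp hw).2
    have hcardle := card_le_card (houtsub u w hw')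
    have hfle : (univ.filter (fun x => D x u)).card ≤ n := by
      calc (univ.filter (fun x => D x u)).card ≤ univ.card := card_filter_le _ _
        _ = n := by rw [card_univ, hcard]
    have hsd : ((univ \ univ.filter (fun x => D x u)).card : ℝ)
        = (n : ℝ) - (univ.filter (fun x => D x u)).card := by
      rw [card_sdiff_of_subset (subset_univ _), card_univ, hcard, Nat.cast_sub hfle]
    have h2 : ((univ.filter (fun x => D w x)).card : ℝ)
        ≤ ((univ \ univ.filter (fun x => D x u)).card : ℝ) := by exact_mod_cast hcardle
    have h3 := hdeg w
    rw [hsd] at h2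
    linarith
  -- double counting of arcs inside a set
  have hsumM : ∀ M : Finset V, ∑ a ∈ M, (M.filter (fun t => D a t)).card
      = ∑ a ∈ M, (M.filter (fun t => D t a)).card := by
    intro M
    simp only [card_filter]
    exact Finset.sum_comm
  -- existence of a vertex of large in-degree
  have hexists : ∃ u : V, ((1:ℝ)/2 - α) * n ≤ ((univ.filter (fun w => D w u)).card : ℝ) := by
    have hne : (univ : Finset V).Nonempty := by
      rw [← card_pos, card_univ, hcard]; omega
    have e1 : ∑ v : V, ((univ.filter (fun w => D w v)).card : ℝ)
        = ∑ v : V, ((univ.filter (fun w => D v w)).card : ℝ) := by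
      exact_mod_cast (hsumM univ).symm
    have hsums : ∑ _v : V, (((1:ℝ)/2 - α) * n) ≤ ∑ v : V, ((univ.filter (fun w => D w v)).card : ℝ) := by
      rw [e1]
      exact Finset.sum_le_sum (fun v _ => hdeg v)
    obtain ⟨u, -, hu⟩ := Finset.exists_le_of_sum_le hne hsums
    exact ⟨u, hu⟩
  -- independence of the 2-cycle neighbourhood
  have hindep : ∀ u : V, ∀ z ∈ (univ.filter (fun w => D u w)) ∩ (univ.filter (fun w => D w u)),
      ∀ z' ∈ (univ.filter (fun w => D u w)) ∩ (univ.filter (fun w => D w u)), ¬ D z z' := by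
    intro u z hz z' hz' hzz'
    rw [mem_inter, mem_filter, mem_filter] at hz hz'
    exact h1 u z z' hz.1.2 hzz' hz'.2.2
  -- main lemma : size of the 2-cycle neighbourhood
  have hZmain : ∀ (u : V) (k : ℝ), 0 ≤ k →
      ((1:ℝ)/2 + α) * n - k ≤ ((univ.filter (fun w => D w u)).card : ℝ) →
      ((1:ℝ)/2 - α) * n - 2*k
        ≤ (((univ.filter (fun w => D u w)) ∩ (univ.filter (fun w => D w u))).card : ℝ) := by
    intro u k hk hku
    set S := univ.filter (fun w => D u w) with hSdef
    set I := univ.filter (fun w => D w u) with hIdef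
    set M := S \ I with hMdef
    have hIle : I.card ≤ n := by
      calc I.card ≤ univ.card := card_filter_le _ _
        _ = n := by rw [card_univ, hcard]
    have hcompl : ((univ \ I).card : ℝ) ≤ ((1:ℝ)/2 - α)*n + k := by
      rw [card_sdiff_of_subset (subset_univ _), card_univ, hcard, Nat.cast_sub hIle]
      linarith
    have hkey : ∀ s : V, D u s → ∀ P : Finset V, P ⊆ univ \ I →
        (∀ t ∈ P, ¬ D s t) → (P.card : ℝ) ≤ k := by
      intro s hus P hPsub hPmiss
      have houts : univ.filter (fun w => D s w) ⊆ univ \ I := houtsub u s hus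
      have hsub2 : P ⊆ (univ \ I) \ univ.filter (fun w => D s w) := by
        intro t ht
        rw [mem_sdiff]
        exact ⟨hPsub ht, fun htf => hPmiss t ht (mem_filter.mp htf).2⟩
      have h3 := card_le_card hsub2
      rw [card_sdiff_of_subset houts] at h3
      have h4 : (univ.filter (fun w => D s w)).card ≤ (univ \ I).card := card_le_card houts
      have h5 : ((P.card : ℝ)) ≤ ((univ \ I).card : ℝ) - ((univ.filter (fun w => D s w)).card : ℝ) := by
        rw [← Nat.cast_sub h4]; exact_mod_cast h3
      linarith [hdeg s]
    have hMsub : M ⊆ univ \ I := by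
      intro t ht
      simp only [hMdef, mem_sdiff] at ht
      rw [mem_sdiff]
      exact ⟨mem_univ t, ht.2⟩
    have hMD : ∀ s ∈ M, D u s := by
      intro s hs
      simp only [hMdef, hSdef, mem_sdiff, mem_filter] at hs
      exact hs.1.2
    have hout : ∀ s ∈ M, (M.card : ℝ) - k ≤ ((M.filter (fun t => D s t)).card : ℝ) := by
      intro s hs
      have hP : ((M.filter (fun t => ¬ D s t)).card : ℝ) ≤ k := by
        apply hkey s (hMD s hs)
        · exact (filter_subset _ _).trans hMsub
        · intro t ht; exact (mem_filter.mp ht).2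
      have hsplit : (M.filter (fun t => D s t)).card + (M.filter (fun t => ¬ D s t)).card = M.card :=
        card_filter_add_card_filter_not (fun t => D s t)
      have hsplit' : ((M.filter (fun t => D s t)).card : ℝ) + ((M.filter (fun t => ¬ D s t)).card : ℝ)
          = (M.card : ℝ) := by exact_mod_cast hsplit
      linarith
    have hin : k < (M.card : ℝ) → ∀ a ∈ M, ((M.filter (fun t => D t a)).card : ℝ) ≤ k := by
      intro hmk a ha
      have h6 := hout a ha
      have h7 : (0:ℝ) < ((M.filter (fun t => D a t)).card : ℝ) := by linarith
      have h8 : (M.filter (fun t => D a t)).Nonempty := card_pos.mp (by exact_mod_cast h7)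
      obtain ⟨b, hb⟩ := h8
      have hbM : b ∈ M := (mem_filter.mp hb).1
      have hab : D a b := (mem_filter.mp hb).2
      apply hkey b (hMD b hbM)
      · exact (filter_subset _ _).trans hMsub
      · intro t ht
        exact fun hbt => h1 a b t hab hbt (mem_filter.mp ht).2
    have hM2k : (M.card : ℝ) ≤ 2*k := by
      by_cases hmk : (M.card : ℝ) ≤ k
      · linarith
      · push_neg at hmk
        have hlow : (M.card : ℝ) * ((M.card : ℝ) - k)
            ≤ ∑ a ∈ M, ((M.filter (fun t => D a t)).card : ℝ) := by
          have := Finset.card_nsmul_le_sum M (fun a => ((M.filter (fun t => D a t)).card : ℝ))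
            ((M.card : ℝ) - k) (fun s hs => hout s hs)
          rwa [nsmul_eq_mul] at this
        have hhigh : ∑ a ∈ M, ((M.filter (fun t => D t a)).card : ℝ) ≤ (M.card : ℝ) * k := by
          have := Finset.sum_le_card_nsmul M (fun a => ((M.filter (fun t => D t a)).card : ℝ))
            k (hin hmk)
          rwa [nsmul_eq_mul] at this
        have heq : ∑ a ∈ M, ((M.filter (fun t => D a t)).card : ℝ)
            = ∑ a ∈ M, ((M.filter (fun t => D t a)).card : ℝ) := by
          exact_mod_cast hsumM M
        nlinarith
    have hSplit : (S ∩ I).card + (S \ I).card = S.card := card_inter_add_card_sdiff S I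
    have hSI : ((S ∩ I).card : ℝ) + (M.card : ℝ) = (S.card : ℝ) := by
      rw [hMdef]; exact_mod_cast hSplit
    have hS : ((1:ℝ)/2 - α)*n ≤ (S.card : ℝ) := hdeg u
    linarith
  -- the set of vertices of small in-degree
  set Bs := univ.filter (fun v => ((univ.filter (fun w => D w v)).card : ℝ) < ((1:ℝ)/2 + α)*n - β*n)
    with hBsdef
  have hBsle : Bs.card ≤ n := by
    calc Bs.card ≤ univ.card := card_filter_le _ _
      _ = n := by rw [card_univ, hcard]
  have hBcard : (Bs.card : ℝ) ≤ 2*β*n := by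
    have e1 : ∑ v : V, ((univ.filter (fun w => D w v)).card : ℝ)
        = ∑ v : V, ((univ.filter (fun w => D v w)).card : ℝ) := by
      exact_mod_cast (hsumM univ).symm
    have hlow : (n : ℝ) * (((1:ℝ)/2 - α) * n) ≤ ∑ v : V, ((univ.filter (fun w => D w v)).card : ℝ) := by
      rw [e1]
      have := Finset.card_nsmul_le_sum univ (fun v => ((univ.filter (fun w => D v w)).card : ℝ))
        (((1:ℝ)/2 - α) * n) (fun v _ => hdeg v)
      rwa [nsmul_eq_mul, card_univ, hcard] at this
    have hsplit := Finset.sum_filter_add_sum_filter_not univ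
      (fun v => ((univ.filter (fun w => D w v)).card : ℝ) < ((1:ℝ)/2 + α)*n - β*n)
      (fun v => ((univ.filter (fun w => D w v)).card : ℝ))
    have hb1 : ∑ v ∈ Bs, ((univ.filter (fun w => D w v)).card : ℝ)
        ≤ (Bs.card : ℝ) * (((1:ℝ)/2 + α)*n - β*n) := by
      have := Finset.sum_le_card_nsmul Bs (fun v => ((univ.filter (fun w => D w v)).card : ℝ))
        (((1:ℝ)/2 + α)*n - β*n) (fun v hv => by
          rw [hBsdef, mem_filter] at hv
          exact le_of_lt hv.2)
      rwa [nsmul_eq_mul] at this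
    set Cs := univ.filter (fun v => ¬ (((univ.filter (fun w => D w v)).card : ℝ) < ((1:ℝ)/2 + α)*n - β*n))
      with hCsdef
    have hCscard : Bs.card + Cs.card = n := by
      rw [hBsdef, hCsdef]
      rw [card_filter_add_card_filter_not, card_univ, hcard]
    have hb2 : ∑ v ∈ Cs, ((univ.filter (fun w => D w v)).card : ℝ)
        ≤ (Cs.card : ℝ) * (((1:ℝ)/2 + α)*n) := by
      have := Finset.sum_le_card_nsmul Cs (fun v => ((univ.filter (fun w => D w v)).card : ℝ))
        (((1:ℝ)/2 + α)*n) (fun v _ => hinle v)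
      rwa [nsmul_eq_mul] at this
    have hCval : (Cs.card : ℝ) = (n : ℝ) - (Bs.card : ℝ) := by
      have : (Bs.card : ℝ) + (Cs.card : ℝ) = (n : ℝ) := by exact_mod_cast hCscard
      linarith
    have hBnonneg : (0:ℝ) ≤ (Bs.card : ℝ) := Nat.cast_nonneg _
    -- combine
    have hcomb : (n : ℝ) * (((1:ℝ)/2 - α) * n)
        ≤ (Bs.card : ℝ) * (((1:ℝ)/2 + α)*n - β*n) + ((n : ℝ) - (Bs.card : ℝ)) * (((1:ℝ)/2 + α)*n) := by
      rw [← hCval]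
      calc (n : ℝ) * (((1:ℝ)/2 - α) * n)
          ≤ ∑ v : V, ((univ.filter (fun w => D w v)).card : ℝ) := hlow
        _ = (∑ v ∈ Bs, ((univ.filter (fun w => D w v)).card : ℝ))
            + ∑ v ∈ Cs, ((univ.filter (fun w => D w v)).card : ℝ) := by
            rw [hBsdef, hCsdef, hsplit]
        _ ≤ _ := add_le_add hb1 hb2
    have hkey2 : (Bs.card : ℝ) * (β*↑n) ≤ 2*α*↑n*↑n := by linarith [hcomb]
    have hbn : (0:ℝ) < β*↑n := mul_pos hβpos hnpos
    have hab : α*↑n*↑n = β*↑n*(β*↑n) := by rw [← hβsq]; ring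
    have h2' : (Bs.card : ℝ) * (β*↑n) ≤ (2*β*↑n)*(β*↑n) := by
      have he : (2*β*↑n)*(β*↑n) = 2*(α*↑n*↑n) := by rw [hab]; ring
      rw [he]; linarith [hkey2]
    exact le_of_mul_le_mul_right h2' hbn
  -- first independent set
  obtain ⟨u₁, hu₁⟩ := hexists
  set Z₁ := (univ.filter (fun w => D u₁ w)) ∩ (univ.filter (fun w => D w u₁)) with hZ₁def
  have hZ1card : ((1:ℝ)/2 - α) * n - 2*(2*α*n) ≤ (Z₁.card : ℝ) := by
    apply hZmain u₁ (2*α*n) (by positivity)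
    linarith
  -- find a vertex of Z₁ with large in-degree
  have hcoef : 2*β < 1/2 - 5*α := by linarith
  have hZ1Bs : (Bs.card : ℝ) < (Z₁.card : ℝ) := by
    have h9 : (2*β) * (n:ℝ) < (1/2 - 5*α) * n := by
      exact mul_lt_mul_of_pos_right hcoef hnpos
    nlinarith
  have hnotsub : ¬ Z₁ ⊆ Bs := by
    intro hss
    have := card_le_card hss
    have : (Z₁.card : ℝ) ≤ (Bs.card : ℝ) := by exact_mod_cast this
    linarith
  obtain ⟨u₂, hu₂Z₁, hu₂Bs⟩ := not_subset.mp hnotsub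
  have hu₂deg : ((1:ℝ)/2 + α)*n - β*n ≤ ((univ.filter (fun w => D w u₂)).card : ℝ) := by
    by_contra hcon
    push_neg at hcon
    exact hu₂Bs (by rw [hBsdef]; exact mem_filter.mpr ⟨mem_univ _, hcon⟩)
  set Z₂ := (univ.filter (fun w => D u₂ w)) ∩ (univ.filter (fun w => D w u₂)) with hZ₂def
  have hZ2card : ((1:ℝ)/2 - α) * n - 2*(β*n) ≤ (Z₂.card : ℝ) := by
    apply hZmain u₂ (β*n) (by positivity)
    exact hu₂deg
  refine ⟨Z₁, Z₂, ?_, ?_, ?_, hindep u₁, hindep u₂⟩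
  · -- disjointness
    rw [Finset.disjoint_left]
    intro a haZ₁ haZ₂
    have hD : D u₂ a := by
      have h10 := haZ₂
      rw [hZ₂def, mem_inter, mem_filter] at h10
      exact h10.1.2
    exact hindep u₁ u₂ hu₂Z₁ a haZ₁ hD
  · -- size of Z₁
    have h11 : 5*α ≤ 4*β := by linarith
    have h12 : (5*α) * (n:ℝ) ≤ (4*β) * n := mul_le_mul_of_nonneg_right h11 (le_of_lt hnpos)
    linarith
  · -- size of Z₂
    have h13 : α + 2*β ≤ 4*β := by linarith
    have h14 : (α + 2*β) * (n:ℝ) ≤ (4*β) * n := mul_le_mul_of_nonneg_right h13 (le_of_lt hnpos)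
    linarith
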